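/- Let γ ∈ [0,1), let μ₀ be a probability distribution on S, let π be a policy on (S, A), let T and T̂ be transition kernels from S × A to S, and let R and R̂ be reward kernels with values in a finite set 𝓡 ⊂ ℝ satisfying |ρ| ≤ r_max, with mean rewards r(s,a) = ∑_{ρ} ρ·R(ρ|s,a) and r̂(s,a) = ∑_{ρ} ρ·R̂(ρ|s,a). Let (P_t) and (P̂_t) be the state-action occupancies generated from μ₀ under the same policy π by the kernels T and T̂ respectively, and define J = ∑_{t=0}^∞ γ^t ∑_{s,a} P_t(s,a)·r(s,a) and Ĵ = ∑_{t=0}^∞ γ^t ∑_{s,a} P̂_t(s,a)·r̂(s,a). Suppose for every t ≥ 0: ∑_{s,a} P_t(s,a)·D_TV(R(·|s,a) ‖ R̂(·|s,a)) ≤ ε_r and ∑_{s,a} P_t(s,a)·D_TV(T(·|s,a) ‖ T̂(·|s,a)) ≤ ε_m. Then |J − Ĵ| ≤ 2·r_max·∑_{t=0}^∞ γ^t·(ε_r + t·ε_m) = 2·r_max·(ε_r/(1−γ) + γ·ε_m/(1−γ)²). -/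

import Mathlib

open Finset

/-- Total-variation distance between two functions on a finite type. -/
noncomputable def tv {X : Type*} [Fintype X] (p q : X → ℝ) : ℝ :=
  (1 / 2) * ∑ x, |p x - q x|

/-- Total-variation distance between two functions restricted to a finite set. -/
noncomputable def tvOn {X : Type*} (F : Finset X) (p q : X → ℝ) : ℝ :=
  (1 / 2) * ∑ x ∈ F, |p x - q x|

/-- Return gap between the true and the model dynamics under a same policy: bounded by
2·r_max·∑ γ^t·(ε_r + t·ε_m) = 2·r_max·(ε_r/(1−γ) + γ·ε_m/(1−γ)²). -/
theorem return_gap_model_error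
    {S A : Type*} [Fintype S] [Fintype A] [Nonempty S] [Nonempty A]
    (γ : ℝ) (hγ0 : 0 ≤ γ) (hγ1 : γ < 1)
    (μ0 : S → ℝ) (hμ0 : (∀ s, 0 ≤ μ0 s) ∧ ∑ s, μ0 s = 1)
    (π : S → A → ℝ)
    (hπ : ∀ s, (∀ a, 0 ≤ π s a) ∧ ∑ a, π s a = 1)
    (T That : S × A → S → ℝ)
    (hT : ∀ sa, (∀ s', 0 ≤ T sa s') ∧ ∑ s', T sa s' = 1)
    (hThat : ∀ sa, (∀ s', 0 ≤ That sa s') ∧ ∑ s', That sa s' = 1)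
    (Rset : Finset ℝ) (rmax : ℝ)
    (hbound : ∀ ρ ∈ Rset, |ρ| ≤ rmax)
    (R Rhat : S × A → ℝ → ℝ)
    (hR : ∀ sa, (∀ ρ ∈ Rset, 0 ≤ R sa ρ) ∧ ∑ ρ ∈ Rset, R sa ρ = 1)
    (hRhat : ∀ sa, (∀ ρ ∈ Rset, 0 ≤ Rhat sa ρ) ∧ ∑ ρ ∈ Rset, Rhat sa ρ = 1)
    (P Phat : ℕ → S × A → ℝ)
    (hP0 : ∀ sa : S × A, P 0 sa = μ0 sa.1 * π sa.1 sa.2)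
    (hPhat0 : ∀ sa : S × A, Phat 0 sa = μ0 sa.1 * π sa.1 sa.2)
    (hPrec : ∀ t (x : S × A),
      P (t + 1) x = ∑ sa : S × A, P t sa * T sa x.1 * π x.1 x.2)
    (hPhatrec : ∀ t (x : S × A),
      Phat (t + 1) x = ∑ sa : S × A, Phat t sa * That sa x.1 * π x.1 x.2)
    (εr εm : ℝ)
    (hεr : ∀ t, ∑ sa : S × A, P t sa * tvOn Rset (R sa) (Rhat sa) ≤ εr)
    (hεm : ∀ t, ∑ sa : S × A, P t sa * tv (T sa) (That sa) ≤ εm) :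
    |(∑' t : ℕ, γ ^ t * ∑ sa : S × A, P t sa * ∑ ρ ∈ Rset, ρ * R sa ρ)
       - ∑' t : ℕ, γ ^ t * ∑ sa : S × A, Phat t sa * ∑ ρ ∈ Rset, ρ * Rhat sa ρ|
      ≤ 2 * rmax * ∑' t : ℕ, γ ^ t * (εr + t * εm)
    ∧ 2 * rmax * ∑' t : ℕ, γ ^ t * (εr + t * εm)
      = 2 * rmax * (εr / (1 - γ) + γ * εm / (1 - γ) ^ 2) := by
  obtain ⟨hμpos, hμsum⟩ := hμ0
  -- Rset is nonempty and rmax ≥ 0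
  have hRne : Rset.Nonempty := by
    rcases Finset.eq_empty_or_nonempty Rset with h | h
    · have := (hR (Classical.arbitrary (S × A))).2
      simp [h] at this
    · exact h
  obtain ⟨ρ0, hρ0⟩ := hRne
  have hrmax : 0 ≤ rmax := le_trans (abs_nonneg ρ0) (hbound ρ0 hρ0)
  -- occupancies are probability distributions
  have hPprob : ∀ t, (∀ sa, 0 ≤ P t sa) ∧ ∑ sa, P t sa = 1 := by
    intro t
    induction t with
    | zero =>
      refine ⟨fun sa => ?_, ?_⟩
      · rw [hP0]; exact mul_nonneg (hμpos _) ((hπ _).1 _)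
      · simp only [hP0]
        rw [Fintype.sum_prod_type]
        calc ∑ s, ∑ a, μ0 s * π s a = ∑ s, μ0 s * ∑ a, π s a := by
              simp [Finset.mul_sum]
          _ = 1 := by simp only [(hπ _).2, mul_one]; exact hμsum
    | succ t ih =>
      refine ⟨fun sa => ?_, ?_⟩
      · rw [hPrec]
        exact Finset.sum_nonneg fun x _ => mul_nonneg
          (mul_nonneg (ih.1 x) ((hT x).1 _)) ((hπ _).1 _)
      · simp only [hPrec]
        rw [Finset.sum_comm]
        calc ∑ sa : S × A, ∑ x : S × A, P t sa * T sa x.1 * π x.1 x.2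
            = ∑ sa : S × A, P t sa := by
              refine Finset.sum_congr rfl fun sa _ => ?_
              rw [Fintype.sum_prod_type]
              calc ∑ s', ∑ a', P t sa * T sa s' * π s' a'
                  = ∑ s', P t sa * T sa s' * ∑ a', π s' a' := by
                    simp [Finset.mul_sum]
                _ = P t sa * ∑ s', T sa s' := by
                    simp only [(hπ _).2, mul_one, Finset.mul_sum]
                _ = P t sa := by rw [(hT sa).2, mul_one]
          _ = 1 := ih.2
  have hPhatprob : ∀ t, (∀ sa, 0 ≤ Phat t sa) ∧ ∑ sa, Phat t sa = 1 := by
    intro t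
    induction t with
    | zero =>
      refine ⟨fun sa => ?_, ?_⟩
      · rw [hPhat0]; exact mul_nonneg (hμpos _) ((hπ _).1 _)
      · simp only [hPhat0]
        rw [Fintype.sum_prod_type]
        calc ∑ s, ∑ a, μ0 s * π s a = ∑ s, μ0 s * ∑ a, π s a := by
              simp [Finset.mul_sum]
          _ = 1 := by simp only [(hπ _).2, mul_one]; exact hμsum
    | succ t ih =>
      refine ⟨fun sa => ?_, ?_⟩
      · rw [hPhatrec]
        exact Finset.sum_nonneg fun x _ => mul_nonneg
          (mul_nonneg (ih.1 x) ((hThat x).1 _)) ((hπ _).1 _)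
      · simp only [hPhatrec]
        rw [Finset.sum_comm]
        calc ∑ sa : S × A, ∑ x : S × A, Phat t sa * That sa x.1 * π x.1 x.2
            = ∑ sa : S × A, Phat t sa := by
              refine Finset.sum_congr rfl fun sa _ => ?_
              rw [Fintype.sum_prod_type]
              calc ∑ s', ∑ a', Phat t sa * That sa s' * π s' a'
                  = ∑ s', Phat t sa * That sa s' * ∑ a', π s' a' := by
                    simp [Finset.mul_sum]
                _ = Phat t sa * ∑ s', That sa s' := by
                    simp only [(hπ _).2, mul_one, Finset.mul_sum]
                _ = Phat t sa := by rw [(hThat sa).2, mul_one]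
          _ = 1 := ih.2
  -- nonnegativity of εr and εm
  have htv_nonneg : ∀ sa, 0 ≤ tv (T sa) (That sa) := fun sa =>
    mul_nonneg (by norm_num) (Finset.sum_nonneg fun x _ => abs_nonneg _)
  have htvOn_nonneg : ∀ sa, 0 ≤ tvOn Rset (R sa) (Rhat sa) := fun sa =>
    mul_nonneg (by norm_num) (Finset.sum_nonneg fun x _ => abs_nonneg _)
  have hεr0 : 0 ≤ εr := le_trans
    (Finset.sum_nonneg fun sa _ => mul_nonneg ((hPprob 0).1 sa) (htvOn_nonneg sa)) (hεr 0)
  have hεm0 : 0 ≤ εm := le_trans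
    (Finset.sum_nonneg fun sa _ => mul_nonneg ((hPprob 0).1 sa) (htv_nonneg sa)) (hεm 0)
  -- TV distance between occupancies grows at most linearly
  have hD : ∀ t, ∑ sa, |P t sa - Phat t sa| ≤ 2 * t * εm := by
    intro t
    induction t with
    | zero => simp [hP0, hPhat0]
    | succ t ih =>
      have key : ∑ x : S × A, |P (t+1) x - Phat (t+1) x|
          ≤ (∑ sa : S × A, P t sa * (2 * tv (T sa) (That sa)))
            + ∑ sa : S × A, |P t sa - Phat t sa| := by
        calc ∑ x : S × A, |P (t+1) x - Phat (t+1) x|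
            ≤ ∑ x : S × A, ∑ sa : S × A,
                (P t sa * |T sa x.1 - That sa x.1|
                  + |P t sa - Phat t sa| * That sa x.1) * π x.1 x.2 := by
              refine Finset.sum_le_sum fun x _ => ?_
              rw [hPrec, hPhatrec, ← Finset.sum_sub_distrib]
              refine le_trans (Finset.abs_sum_le_sum_abs _ _) ?_
              refine Finset.sum_le_sum fun sa _ => ?_
              have expand : P t sa * T sa x.1 * π x.1 x.2
                  - Phat t sa * That sa x.1 * π x.1 x.2
                  = (P t sa * (T sa x.1 - That sa x.1)
                    + (P t sa - Phat t sa) * That sa x.1) * π x.1 x.2 := by ring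
              rw [expand, abs_mul, abs_of_nonneg ((hπ _).1 _)]
              refine mul_le_mul_of_nonneg_right ?_ ((hπ _).1 _)
              refine le_trans (abs_add_le _ _) ?_
              rw [abs_mul, abs_mul, abs_of_nonneg ((hPprob t).1 sa),
                abs_of_nonneg ((hThat sa).1 _)]
          _ = ∑ sa : S × A, ∑ x : S × A,
                (P t sa * |T sa x.1 - That sa x.1|
                  + |P t sa - Phat t sa| * That sa x.1) * π x.1 x.2 :=
              by rw [Finset.sum_comm]
          _ = ∑ sa : S × A, (P t sa * (2 * tv (T sa) (That sa))
                + |P t sa - Phat t sa|) := by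
              refine Finset.sum_congr rfl fun sa _ => ?_
              rw [Fintype.sum_prod_type]
              calc ∑ s', ∑ a', (P t sa * |T sa s' - That sa s'|
                    + |P t sa - Phat t sa| * That sa s') * π s' a'
                  = ∑ s', (P t sa * |T sa s' - That sa s'|
                    + |P t sa - Phat t sa| * That sa s') * ∑ a', π s' a' := by
                    simp [Finset.mul_sum]
                _ = ∑ s', (P t sa * |T sa s' - That sa s'|
                    + |P t sa - Phat t sa| * That sa s') := by
                    simp only [(hπ _).2, mul_one]
                _ = P t sa * ∑ s', |T sa s' - That sa s'|
                    + |P t sa - Phat t sa| * ∑ s', That sa s' := by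
                    rw [Finset.sum_add_distrib, Finset.mul_sum, Finset.mul_sum]
                _ = P t sa * (2 * tv (T sa) (That sa)) + |P t sa - Phat t sa| := by
                    rw [(hThat sa).2, mul_one, tv]; ring
          _ = _ := Finset.sum_add_distrib
      have h1 : ∑ sa : S × A, P t sa * (2 * tv (T sa) (That sa)) ≤ 2 * εm := by
        have : ∑ sa : S × A, P t sa * (2 * tv (T sa) (That sa))
            = 2 * ∑ sa : S × A, P t sa * tv (T sa) (That sa) := by
          rw [Finset.mul_sum]; exact Finset.sum_congr rfl fun sa _ => by ring
        rw [this]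
        linarith [hεm t]
      calc ∑ sa, |P (t+1) sa - Phat (t+1) sa|
          ≤ 2 * εm + 2 * t * εm := by linarith
        _ = 2 * (t + 1 : ℕ) * εm := by push_cast; ring
  -- mean rewards are bounded and close
  have hmean_bd : ∀ sa, |∑ ρ ∈ Rset, ρ * Rhat sa ρ| ≤ rmax := by
    intro sa
    refine le_trans (Finset.abs_sum_le_sum_abs _ _) ?_
    calc ∑ ρ ∈ Rset, |ρ * Rhat sa ρ| ≤ ∑ ρ ∈ Rset, rmax * Rhat sa ρ := by
          refine Finset.sum_le_sum fun ρ hρ => ?_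
          rw [abs_mul, abs_of_nonneg ((hRhat sa).1 ρ hρ)]
          exact mul_le_mul_of_nonneg_right (hbound ρ hρ) ((hRhat sa).1 ρ hρ)
      _ = rmax := by rw [← Finset.mul_sum, (hRhat sa).2, mul_one]
  have hmean_close : ∀ sa, |∑ ρ ∈ Rset, ρ * R sa ρ - ∑ ρ ∈ Rset, ρ * Rhat sa ρ|
      ≤ 2 * rmax * tvOn Rset (R sa) (Rhat sa) := by
    intro sa
    rw [← Finset.sum_sub_distrib]
    refine le_trans (Finset.abs_sum_le_sum_abs _ _) ?_
    calc ∑ ρ ∈ Rset, |ρ * R sa ρ - ρ * Rhat sa ρ|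
        = ∑ ρ ∈ Rset, |ρ| * |R sa ρ - Rhat sa ρ| := by
          refine Finset.sum_congr rfl fun ρ _ => ?_
          rw [← abs_mul]; ring_nf
      _ ≤ ∑ ρ ∈ Rset, rmax * |R sa ρ - Rhat sa ρ| :=
          Finset.sum_le_sum fun ρ hρ =>
            mul_le_mul_of_nonneg_right (hbound ρ hρ) (abs_nonneg _)
      _ = 2 * rmax * tvOn Rset (R sa) (Rhat sa) := by
          rw [← Finset.mul_sum, tvOn]; ring
  -- per-step gap bound
  have hstep : ∀ t, |(∑ sa : S × A, P t sa * ∑ ρ ∈ Rset, ρ * R sa ρ)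
      - ∑ sa : S × A, Phat t sa * ∑ ρ ∈ Rset, ρ * Rhat sa ρ|
      ≤ 2 * rmax * (εr + t * εm) := by
    intro t
    have decomp : (∑ sa : S × A, P t sa * ∑ ρ ∈ Rset, ρ * R sa ρ)
        - ∑ sa : S × A, Phat t sa * ∑ ρ ∈ Rset, ρ * Rhat sa ρ
        = ∑ sa : S × A, (P t sa * (∑ ρ ∈ Rset, ρ * R sa ρ - ∑ ρ ∈ Rset, ρ * Rhat sa ρ)
            + (P t sa - Phat t sa) * ∑ ρ ∈ Rset, ρ * Rhat sa ρ) := by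
      rw [← Finset.sum_sub_distrib]
      exact Finset.sum_congr rfl fun sa _ => by ring
    rw [decomp]
    refine le_trans (Finset.abs_sum_le_sum_abs _ _) ?_
    have bd : ∀ sa : S × A, |P t sa * (∑ ρ ∈ Rset, ρ * R sa ρ - ∑ ρ ∈ Rset, ρ * Rhat sa ρ)
        + (P t sa - Phat t sa) * ∑ ρ ∈ Rset, ρ * Rhat sa ρ|
        ≤ P t sa * (2 * rmax * tvOn Rset (R sa) (Rhat sa))
          + |P t sa - Phat t sa| * rmax := by
      intro sa
      refine le_trans (abs_add_le _ _) (add_le_add ?_ ?_)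
      · rw [abs_mul, abs_of_nonneg ((hPprob t).1 sa)]
        exact mul_le_mul_of_nonneg_left (hmean_close sa) ((hPprob t).1 sa)
      · rw [abs_mul]
        exact mul_le_mul_of_nonneg_left (hmean_bd sa) (abs_nonneg _)
    refine le_trans (Finset.sum_le_sum fun sa _ => bd sa) ?_
    rw [Finset.sum_add_distrib]
    have h1 : ∑ sa : S × A, P t sa * (2 * rmax * tvOn Rset (R sa) (Rhat sa))
        ≤ 2 * rmax * εr := by
      have : ∑ sa : S × A, P t sa * (2 * rmax * tvOn Rset (R sa) (Rhat sa))
          = 2 * rmax * ∑ sa : S × A, P t sa * tvOn Rset (R sa) (Rhat sa) := by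
        rw [Finset.mul_sum]; exact Finset.sum_congr rfl fun sa _ => by ring
      rw [this]
      exact mul_le_mul_of_nonneg_left (hεr t) (by positivity)
    have h2 : ∑ sa : S × A, |P t sa - Phat t sa| * rmax ≤ 2 * t * εm * rmax := by
      rw [← Finset.sum_mul]
      exact mul_le_mul_of_nonneg_right (hD t) hrmax
    nlinarith
  -- termwise bounds and summability
  set f : ℕ → ℝ := fun t => γ ^ t * ∑ sa : S × A, P t sa * ∑ ρ ∈ Rset, ρ * R sa ρ with hf
  set g : ℕ → ℝ := fun t => γ ^ t * ∑ sa : S × A, Phat t sa * ∑ ρ ∈ Rset, ρ * Rhat sa ρ with hg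
  have hγn : ‖γ‖ < 1 := by rw [Real.norm_eq_abs, abs_of_nonneg hγ0]; exact hγ1
  have hgeom : Summable fun t : ℕ => γ ^ t := summable_geometric_of_lt_one hγ0 hγ1
  have htgeom : Summable fun t : ℕ => (t : ℝ) * γ ^ t := by
    have := summable_pow_mul_geometric_of_norm_lt_one 1 hγn
    simpa using this
  have hhsum : Summable fun t : ℕ => γ ^ t * (εr + t * εm) := by
    have : (fun t : ℕ => γ ^ t * (εr + t * εm))
        = fun t : ℕ => εr * γ ^ t + εm * ((t : ℝ) * γ ^ t) := by
      funext t; ring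
    rw [this]
    exact ((hgeom.mul_left εr).add (htgeom.mul_left εm))
  have hmeanR_bd : ∀ sa, |∑ ρ ∈ Rset, ρ * R sa ρ| ≤ rmax := by
    intro sa
    refine le_trans (Finset.abs_sum_le_sum_abs _ _) ?_
    calc ∑ ρ ∈ Rset, |ρ * R sa ρ| ≤ ∑ ρ ∈ Rset, rmax * R sa ρ := by
          refine Finset.sum_le_sum fun ρ hρ => ?_
          rw [abs_mul, abs_of_nonneg ((hR sa).1 ρ hρ)]
          exact mul_le_mul_of_nonneg_right (hbound ρ hρ) ((hR sa).1 ρ hρ)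
      _ = rmax := by rw [← Finset.mul_sum, (hR sa).2, mul_one]
  have hfabs : ∀ t, |f t| ≤ rmax * γ ^ t := by
    intro t
    rw [hf, abs_mul, abs_pow, abs_of_nonneg hγ0]
    rw [mul_comm (rmax) (γ ^ t)]
    refine mul_le_mul_of_nonneg_left ?_ (pow_nonneg hγ0 t)
    refine le_trans (Finset.abs_sum_le_sum_abs _ _) ?_
    calc ∑ sa : S × A, |P t sa * ∑ ρ ∈ Rset, ρ * R sa ρ|
        ≤ ∑ sa : S × A, P t sa * rmax := by
          refine Finset.sum_le_sum fun sa _ => ?_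
          rw [abs_mul, abs_of_nonneg ((hPprob t).1 sa)]
          exact mul_le_mul_of_nonneg_left (hmeanR_bd sa) ((hPprob t).1 sa)
      _ = rmax := by rw [← Finset.sum_mul, (hPprob t).2, one_mul]
  have hgabs : ∀ t, |g t| ≤ rmax * γ ^ t := by
    intro t
    rw [hg, abs_mul, abs_pow, abs_of_nonneg hγ0]
    rw [mul_comm (rmax) (γ ^ t)]
    refine mul_le_mul_of_nonneg_left ?_ (pow_nonneg hγ0 t)
    refine le_trans (Finset.abs_sum_le_sum_abs _ _) ?_
    calc ∑ sa : S × A, |Phat t sa * ∑ ρ ∈ Rset, ρ * Rhat sa ρ|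
        ≤ ∑ sa : S × A, Phat t sa * rmax := by
          refine Finset.sum_le_sum fun sa _ => ?_
          rw [abs_mul, abs_of_nonneg ((hPhatprob t).1 sa)]
          exact mul_le_mul_of_nonneg_left (hmean_bd sa) ((hPhatprob t).1 sa)
      _ = rmax := by rw [← Finset.sum_mul, (hPhatprob t).2, one_mul]
  have hfsum : Summable f :=
    (hgeom.mul_left rmax).of_norm_bounded (fun t => by
      rw [Real.norm_eq_abs]; exact hfabs t)
  have hgsum : Summable g :=
    (hgeom.mul_left rmax).of_norm_bounded (fun t => by
      rw [Real.norm_eq_abs]; exact hgabs t)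
  have hdiff_bd : ∀ t, |f t - g t| ≤ 2 * rmax * (γ ^ t * (εr + t * εm)) := by
    intro t
    rw [hf, hg, ← mul_sub, abs_mul, abs_pow, abs_of_nonneg hγ0]
    calc γ ^ t * |(∑ sa : S × A, P t sa * ∑ ρ ∈ Rset, ρ * R sa ρ)
          - ∑ sa : S × A, Phat t sa * ∑ ρ ∈ Rset, ρ * Rhat sa ρ|
        ≤ γ ^ t * (2 * rmax * (εr + t * εm)) :=
          mul_le_mul_of_nonneg_left (hstep t) (pow_nonneg hγ0 t)
      _ = 2 * rmax * (γ ^ t * (εr + t * εm)) := by ring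
  constructor
  · rw [← Summable.tsum_sub hfsum hgsum]
    have habs : |∑' t, (f t - g t)| ≤ ∑' t, |f t - g t| := by
      have := norm_tsum_le_tsum_norm (f := fun t => f t - g t) ?_
      · simpa [Real.norm_eq_abs] using this
      · refine ((hhsum.mul_left (2 * rmax)).of_norm_bounded fun t => ?_)
        simp only [Real.norm_eq_abs, abs_abs]
        exact hdiff_bd t
    refine le_trans habs ?_
    rw [show (2 * rmax * ∑' t : ℕ, γ ^ t * (εr + t * εm))
        = ∑' t : ℕ, 2 * rmax * (γ ^ t * (εr + t * εm)) from (tsum_mul_left).symm]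
    refine Summable.tsum_le_tsum hdiff_bd ?_ (hhsum.mul_left _)
    exact (hhsum.mul_left (2 * rmax)).of_norm_bounded fun t => by
      simp only [Real.norm_eq_abs, abs_abs]; exact hdiff_bd t
  · congr 1
    have expand : (fun t : ℕ => γ ^ t * (εr + t * εm))
        = fun t : ℕ => εr * γ ^ t + εm * ((t : ℝ) * γ ^ t) := by
      funext t; ring
    rw [expand, Summable.tsum_add (hgeom.mul_left εr) (htgeom.mul_left εm),
      tsum_mul_left, tsum_mul_left, tsum_geometric_of_lt_one hγ0 hγ1,
      tsum_coe_mul_geometric_of_norm_lt_one hγn]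
    field_simp
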